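/- Energy inequality for the intracellular equation: let Da, K, T > 0, φ ∈ (0,1), let c₁ : [0,1] × [0,T] → ℝ be continuous, and let c₂ : [0,1] × [0,T] → ℝ be such that c₂ and ∂_t c₂ are continuous on [0,1] × [0,T] and (1-φ)·∂_t c₂(x,t) + (Da/K)·c₂(x,t) = Da·c₁(x,t) for all (x,t) ∈ [0,1] × (0,T]. Then for every ε > 0 and every t ∈ (0,T]: ((1-φ)/2)·(d/dt)∫_0^1 c₂(x,t)² dx + (Da/K)·∫_0^1 c₂(x,t)² dx ≤ Da·ε·∫_0^1 c₁(x,t)² dx + (Da/(4ε))·∫_0^1 c₂(x,t)² dx. -/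

import Mathlib

open Set MeasureTheory intervalIntegral

/-- Energy inequality for the intracellular equation: if `c₂` solves
`(1-φ)·∂ₜc₂ + (Da/K)·c₂ = Da·c₁` on `[0,1] × (0,T]`, then for every `ε > 0` and
`t ∈ (0,T]`:
`((1-φ)/2)·(d/dt)∫ c₂² + (Da/K)·∫ c₂² ≤ Da·ε·∫ c₁² + (Da/(4ε))·∫ c₂²`. -/
theorem intracellular_equation_energy_inequality
    (Da K T φ : ℝ) (hDa : 0 < Da) (hK : 0 < K) (hT : 0 < T)
    (hφ : φ ∈ Set.Ioo (0 : ℝ) 1)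
    (c₁ : ℝ → ℝ → ℝ)
    (hc₁ : ContinuousOn (fun p : ℝ × ℝ => c₁ p.1 p.2) (Set.Icc (0 : ℝ) 1 ×ˢ Set.Icc 0 T))
    (c₂ c₂t : ℝ → ℝ → ℝ)
    (hc₂ : ContinuousOn (fun p : ℝ × ℝ => c₂ p.1 p.2) (Set.Icc (0 : ℝ) 1 ×ˢ Set.Icc 0 T))
    (hc₂t : ContinuousOn (fun p : ℝ × ℝ => c₂t p.1 p.2) (Set.Icc (0 : ℝ) 1 ×ˢ Set.Icc 0 T))
    (hdt : ∀ x ∈ Set.Icc (0 : ℝ) 1, ∀ t ∈ Set.Icc 0 T,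
      HasDerivWithinAt (fun s => c₂ x s) (c₂t x t) (Set.Icc 0 T) t)
    (hode : ∀ x ∈ Set.Icc (0 : ℝ) 1, ∀ t ∈ Set.Ioc 0 T,
      (1 - φ) * c₂t x t + (Da / K) * c₂ x t = Da * c₁ x t) :
    ∀ ε > (0 : ℝ), ∀ t ∈ Set.Ioc 0 T,
      ∃ d : ℝ,
        HasDerivWithinAt (fun s => ∫ x in (0 : ℝ)..1, (c₂ x s) ^ 2) d (Set.Icc 0 T) t ∧
        ((1 - φ) / 2) * d + (Da / K) * (∫ x in (0 : ℝ)..1, (c₂ x t) ^ 2) ≤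
          Da * ε * (∫ x in (0 : ℝ)..1, (c₁ x t) ^ 2) +
            (Da / (4 * ε)) * ∫ x in (0 : ℝ)..1, (c₂ x t) ^ 2 := by
  intro ε hε t ht
  have ht' : t ∈ Icc (0 : ℝ) T := ⟨ht.1.le, ht.2⟩
  have h01 : (0 : ℝ) ≤ 1 := by norm_num
  have huIcc : uIcc (0:ℝ) 1 = Icc (0:ℝ) 1 := uIcc_of_le h01
  -- slice continuity in x
  have hslice : ∀ (f : ℝ → ℝ → ℝ),
      ContinuousOn (fun p : ℝ × ℝ => f p.1 p.2) (Icc (0:ℝ) 1 ×ˢ Icc 0 T) →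
      ∀ s ∈ Icc (0:ℝ) T, ContinuousOn (fun x => f x s) (Icc (0:ℝ) 1) := by
    intro f hf s hs
    exact hf.comp (continuous_id.prodMk continuous_const).continuousOn
      (fun x hx => ⟨hx, hs⟩)
  have hc₂x : ∀ s ∈ Icc (0:ℝ) T, ContinuousOn (fun x => c₂ x s) (Icc (0:ℝ) 1) :=
    hslice _ hc₂
  have hc₂tx : ∀ s ∈ Icc (0:ℝ) T, ContinuousOn (fun x => c₂t x s) (Icc (0:ℝ) 1) :=
    hslice _ hc₂t
  have hc₁x : ∀ s ∈ Icc (0:ℝ) T, ContinuousOn (fun x => c₁ x s) (Icc (0:ℝ) 1) :=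
    hslice _ hc₁
  -- interval integrabilities
  have hint : ∀ s ∈ Icc (0:ℝ) T,
      IntervalIntegrable (fun x => (c₂ x s) ^ 2) volume 0 1 := by
    intro s hs
    apply ContinuousOn.intervalIntegrable
    rw [huIcc]; exact (hc₂x s hs).pow 2
  have hintG : IntervalIntegrable (fun x => 2 * c₂ x t * c₂t x t) volume 0 1 := by
    apply ContinuousOn.intervalIntegrable
    rw [huIcc]
    exact (continuousOn_const.mul (hc₂x t ht')).mul (hc₂tx t ht')
  have hint1 : IntervalIntegrable (fun x => (c₁ x t) ^ 2) volume 0 1 := by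
    apply ContinuousOn.intervalIntegrable
    rw [huIcc]; exact (hc₁x t ht').pow 2
  set d : ℝ := ∫ x in (0:ℝ)..1, 2 * c₂ x t * c₂t x t with hd
  refine ⟨d, ?_, ?_⟩
  · -- the derivative statement
    rw [hasDerivWithinAt_iff_isLittleO, Asymptotics.isLittleO_iff]
    intro c hc
    -- uniform continuity of G(x,τ) = 2 c₂ c₂t on the compact product
    have hGcont : ContinuousOn (fun p : ℝ × ℝ => 2 * c₂ p.1 p.2 * c₂t p.1 p.2)
        (Icc (0:ℝ) 1 ×ˢ Icc 0 T) := (continuousOn_const.mul hc₂).mul hc₂t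
    have hcomp : IsCompact (Icc (0:ℝ) 1 ×ˢ Icc (0:ℝ) T) :=
      isCompact_Icc.prod isCompact_Icc
    have hUC := hcomp.uniformContinuousOn_of_continuous hGcont
    rw [Metric.uniformContinuousOn_iff] at hUC
    obtain ⟨δ, hδ, hδ'⟩ := hUC c hc
    have hmem : Metric.ball t δ ∩ Icc (0:ℝ) T ∈ nhdsWithin t (Icc (0:ℝ) T) :=
      Filter.inter_mem (mem_nhdsWithin_of_mem_nhds (Metric.ball_mem_nhds t hδ))
        self_mem_nhdsWithin
    filter_upwards [hmem] with s hs
    obtain ⟨hsball, hsT⟩ := hs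
    rcases eq_or_ne s t with rfl | hst
    · simp
    -- pointwise MVT bound
    have key : ∀ x ∈ Icc (0:ℝ) 1,
        |(c₂ x s) ^ 2 - (c₂ x t) ^ 2 - (s - t) * (2 * c₂ x t * c₂t x t)| ≤
          c * |s - t| := by
      intro x hx
      set a := min s t with ha0
      set b := max s t with hb0
      have hab : a < b := min_lt_max.2 hst
      have habIcc : Icc a b ⊆ Icc (0:ℝ) T := by
        apply Icc_subset_Icc
        · exact le_min hsT.1 ht'.1
        · exact max_le hsT.2 ht'.2
      have hfc : ContinuousOn (fun τ => (c₂ x τ) ^ 2) (Icc a b) := by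
        apply ContinuousOn.pow
        intro τ hτ
        exact ((hdt x hx τ (habIcc hτ)).continuousWithinAt).mono habIcc
      have hff' : ∀ ξ ∈ Ioo a b, HasDerivAt (fun τ => (c₂ x τ) ^ 2)
          (2 * c₂ x ξ * c₂t x ξ) ξ := by
        intro ξ hξ
        have hξ0 : 0 < ξ := lt_of_le_of_lt (le_min hsT.1 ht'.1) hξ.1
        have hξT : ξ < T := lt_of_lt_of_le hξ.2 (max_le hsT.2 ht'.2)
        have h1 : HasDerivAt (fun τ => c₂ x τ) (c₂t x ξ) ξ :=
          (hdt x hx ξ ⟨hξ0.le, hξT.le⟩).hasDerivAt (Icc_mem_nhds hξ0 hξT)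
        have := h1.fun_pow 2
        simpa using this
      obtain ⟨ξ, hξ, hslope⟩ := exists_hasDerivAt_eq_slope _ _ hab hfc hff'
      have hba : b - a ≠ 0 := sub_ne_zero.2 hab.ne'
      have hprod : (2 * c₂ x ξ * c₂t x ξ) * (b - a) = (c₂ x b) ^ 2 - (c₂ x a) ^ 2 :=
        (eq_div_iff hba).mp hslope
      -- (f s - f t) = G ξ * (s - t)
      have hft : (c₂ x s) ^ 2 - (c₂ x t) ^ 2 = (2 * c₂ x ξ * c₂t x ξ) * (s - t) := by
        rcases le_total s t with h | h
        · have ha : a = s := min_eq_left h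
          have hb : b = t := max_eq_right h
          rw [ha, hb] at hprod
          linear_combination hprod
        · have ha : a = t := min_eq_right h
          have hb : b = s := max_eq_left h
          rw [ha, hb] at hprod
          linear_combination -hprod
      have hξIcc : ξ ∈ Icc (0:ℝ) T := habIcc ⟨hξ.1.le, hξ.2.le⟩
      have htab : t ∈ Icc a b := ⟨min_le_right s t, le_max_right s t⟩
      have hba' : b - a = |s - t| := by
        rcases le_total s t with h | h
        · have habs : |s - t| = t - s := by
            rw [abs_of_nonpos (by linarith)]; ring
          rw [habs, hb0, ha0, max_eq_right h, min_eq_left h]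
        · have habs : |s - t| = s - t := abs_of_nonneg (by linarith)
          rw [habs, hb0, ha0, max_eq_left h, min_eq_right h]
      have hξt : |ξ - t| ≤ |s - t| := by
        rw [← hba', abs_le]
        constructor
        · linarith [hξ.1, hξ.2, htab.1, htab.2]
        · linarith [hξ.1, hξ.2, htab.1, htab.2]
      have h1dist : dist ξ t < δ := by
        rw [Real.dist_eq]
        calc |ξ - t| ≤ |s - t| := hξt
          _ < δ := by
            have := Metric.mem_ball.mp hsball
            rwa [Real.dist_eq] at this
      have hdist : dist ((x, ξ) : ℝ × ℝ) (x, t) < δ := by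
        rw [Prod.dist_eq]
        simp only [dist_self]
        exact max_lt hδ h1dist
      have hG := hδ' (x, ξ) ⟨hx, hξIcc⟩ (x, t) ⟨hx, ht'⟩ hdist
      simp only [Real.dist_eq] at hG
      calc |(c₂ x s) ^ 2 - (c₂ x t) ^ 2 - (s - t) * (2 * c₂ x t * c₂t x t)|
          = |2 * c₂ x ξ * c₂t x ξ - 2 * c₂ x t * c₂t x t| * |s - t| := by
            rw [hft, ← abs_mul]
            congr 1
            ring
        _ ≤ c * |s - t| := by
            apply mul_le_mul_of_nonneg_right hG.le (abs_nonneg _)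
    -- assemble the integral bound
    have hints : IntervalIntegrable (fun x => (c₂ x s) ^ 2) volume 0 1 := hint s hsT
    have hintt : IntervalIntegrable (fun x => (c₂ x t) ^ 2) volume 0 1 := hint t ht'
    have heq : (∫ x in (0:ℝ)..1, (c₂ x s) ^ 2) - (∫ x in (0:ℝ)..1, (c₂ x t) ^ 2)
        - (s - t) • d
        = ∫ x in (0:ℝ)..1,
            ((c₂ x s) ^ 2 - (c₂ x t) ^ 2 - (s - t) * (2 * c₂ x t * c₂t x t)) := by
      rw [hd, smul_eq_mul, ← intervalIntegral.integral_const_mul,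
        intervalIntegral.integral_sub (hints.sub hintt) (hintG.const_mul _),
        intervalIntegral.integral_sub hints hintt]
    rw [smul_eq_mul]
    calc ‖(∫ x in (0:ℝ)..1, (c₂ x s) ^ 2) - (∫ x in (0:ℝ)..1, (c₂ x t) ^ 2)
          - (s - t) * d‖
        = ‖∫ x in (0:ℝ)..1,
            ((c₂ x s) ^ 2 - (c₂ x t) ^ 2 - (s - t) * (2 * c₂ x t * c₂t x t))‖ := by
          rw [← heq]; simp [smul_eq_mul]
      _ ≤ (c * |s - t|) * |1 - 0| := by
          apply intervalIntegral.norm_integral_le_of_norm_le_const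
          intro x hx
          have hx' : x ∈ Icc (0:ℝ) 1 := by
            rw [uIoc_of_le h01] at hx
            exact ⟨hx.1.le, hx.2⟩
          simpa using key x hx'
      _ = c * ‖s - t‖ := by simp [Real.norm_eq_abs]
  · -- the inequality
    have hptwise : ∀ x ∈ Icc (0:ℝ) 1,
        (1 - φ) / 2 * (2 * c₂ x t * c₂t x t) + (Da / K) * (c₂ x t) ^ 2 ≤
          Da * ε * (c₁ x t) ^ 2 + Da / (4 * ε) * (c₂ x t) ^ 2 := by
      intro x hx
      have hodex := hode x hx t ht
      have h1 : (1 - φ) / 2 * (2 * c₂ x t * c₂t x t) + (Da / K) * (c₂ x t) ^ 2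
          = Da * (c₁ x t * c₂ x t) := by
        linear_combination (c₂ x t) * hodex
      rw [h1]
      have h4 : (0:ℝ) < 4 * ε := by positivity
      have hkey : Da * ε * (c₁ x t) ^ 2 + Da / (4 * ε) * (c₂ x t) ^ 2
          - Da * (c₁ x t * c₂ x t) = Da / (4 * ε) * (2 * ε * c₁ x t - c₂ x t) ^ 2 := by
        field_simp
        ring
      nlinarith [mul_nonneg (by positivity : (0:ℝ) ≤ Da / (4 * ε))
        (sq_nonneg (2 * ε * c₁ x t - c₂ x t)), hkey]
    have hintL : IntervalIntegrable
        (fun x => (1 - φ) / 2 * (2 * c₂ x t * c₂t x t) + (Da / K) * (c₂ x t) ^ 2)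
        volume 0 1 := (hintG.const_mul _).add ((hint t ht').const_mul _)
    have hintR : IntervalIntegrable
        (fun x => Da * ε * (c₁ x t) ^ 2 + Da / (4 * ε) * (c₂ x t) ^ 2)
        volume 0 1 := (hint1.const_mul _).add ((hint t ht').const_mul _)
    have hmono := intervalIntegral.integral_mono_on h01 hintL hintR hptwise
    rw [intervalIntegral.integral_add (hintG.const_mul _) ((hint t ht').const_mul _),
      intervalIntegral.integral_add (hint1.const_mul _) ((hint t ht').const_mul _),
      intervalIntegral.integral_const_mul, intervalIntegral.integral_const_mul,
      intervalIntegral.integral_const_mul, intervalIntegral.integral_const_mul] at hmono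
    exact hmono
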